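/- Let p ≥ 0 and Φ ∈ S_p*. Then for any q > p + 1/2, the spectral integral ∫_Σ Φ dπ₀ with respect to the canonical spectral measure extends to a bounded linear operator from S_q to S_q* with operator norm at most (∑_{σ∈Γ} λ_σ^{-2(q-p)}) · ‖Φ‖_{-p}. -/

import Mathlib

open scoped BigOperators

/-- `lam σ = ∏_{k∈σ} (1+k)`. -/
noncomputable def lam (σ : Finset ℕ) : ℝ := ∏ k ∈ σ, (1 + k : ℝ)

/-- `ℓ²`-model of the weighted space `S_q`: the standard basis vector `lp.single 2 σ 1`
corresponds to the orthonormal basis vector `λ_σ^{-q} Z_σ` of `S_q`. -/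
noncomputable abbrev Hmodel : Type := lp (fun _ : Finset ℕ => ℂ) 2

lemma lam_pos (σ : Finset ℕ) : 0 < lam σ :=
  Finset.prod_pos fun k _ => by positivity

lemma one_le_lam (σ : Finset ℕ) : 1 ≤ lam σ := by
  calc (1:ℝ) = ∏ _k ∈ σ, (1:ℝ) := Finset.prod_const_one.symm
    _ ≤ lam σ := Finset.prod_le_prod (fun k _ => zero_le_one)
      (fun k _ => le_add_of_nonneg_right (Nat.cast_nonneg k))

lemma lam_mono {σ τ : Finset ℕ} (h : σ ⊆ τ) : lam σ ≤ lam τ := by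
  have hs : lam (τ \ σ) * lam σ = lam τ := Finset.prod_sdiff h
  calc lam σ = 1 * lam σ := (one_mul _).symm
    _ ≤ lam (τ \ σ) * lam σ :=
      mul_le_mul_of_nonneg_right (one_le_lam _) (lam_pos _).le
    _ = lam τ := hs

lemma lam_union_le (σ τ : Finset ℕ) : lam (σ ∪ τ) ≤ lam σ * lam τ := by
  have h := Finset.prod_union_inter (s₁ := σ) (s₂ := τ) (f := fun k => (1 + k : ℝ))
  have h1 : lam (σ ∪ τ) * 1 ≤ lam (σ ∪ τ) * lam (σ ∩ τ) :=
    mul_le_mul_of_nonneg_left (one_le_lam _) (lam_pos _).le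
  calc lam (σ ∪ τ) = lam (σ ∪ τ) * 1 := (mul_one _).symm
    _ ≤ lam (σ ∪ τ) * lam (σ ∩ τ) := h1
    _ = lam σ * lam τ := h

lemma lam_symmDiff_le (σ τ : Finset ℕ) : lam (symmDiff σ τ) ≤ lam σ * lam τ := by
  refine le_trans (lam_mono ?_) (lam_union_le σ τ)
  exact symmDiff_le_sup (a := σ) (b := τ)

lemma summable_lam_rpow {s : ℝ} (hs : 1 < s) :
    Summable (fun σ : Finset ℕ => lam σ ^ (-s)) := by
  have hterm : ∀ σ : Finset ℕ, lam σ ^ (-s) = ∏ k ∈ σ, ((1 : ℝ) + k) ^ (-s) := fun σ =>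
    (Real.finset_prod_rpow σ _ (fun i _ => by positivity) (-s)).symm
  have hg : Summable (fun k : ℕ => ((1 : ℝ) + k) ^ (-s)) := by
    have h0 : Summable (fun n : ℕ => ((n : ℝ) ^ s)⁻¹) := Real.summable_nat_rpow_inv.mpr hs
    have h1 : Summable (fun n : ℕ => ((n : ℝ)) ^ (-s)) := by
      refine h0.congr fun n => ?_
      rw [Real.rpow_neg (Nat.cast_nonneg n)]
    have h2 := (summable_nat_add_iff 1).mpr h1
    refine h2.congr fun n => ?_
    push_cast
    rw [add_comm]
  set c := Real.exp (∑' k : ℕ, ((1 : ℝ) + k) ^ (-s)) with hc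
  refine summable_of_sum_le (c := c) (fun σ => Real.rpow_nonneg (lam_pos σ).le _) (fun u => ?_)
  set N := (u.sup fun σ => σ.sup id) + 1 with hN
  have hsub : u ⊆ (Finset.range N).powerset := by
    intro σ hσ
    rw [Finset.mem_powerset]
    intro k hk
    rw [Finset.mem_range]
    calc k = id k := rfl
      _ ≤ σ.sup id := Finset.le_sup hk
      _ ≤ u.sup (fun σ => σ.sup id) := Finset.le_sup hσ
      _ < N := Nat.lt_succ_self _
  calc ∑ σ ∈ u, lam σ ^ (-s)
      ≤ ∑ σ ∈ (Finset.range N).powerset, lam σ ^ (-s) :=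
        Finset.sum_le_sum_of_subset_of_nonneg hsub (fun σ _ _ => Real.rpow_nonneg (lam_pos σ).le _)
    _ = ∏ k ∈ Finset.range N, (((1 : ℝ) + k) ^ (-s) + 1) := by
        rw [Finset.prod_add]
        simp [hterm]
    _ ≤ ∏ k ∈ Finset.range N, Real.exp (((1 : ℝ) + k) ^ (-s)) := by
        refine Finset.prod_le_prod (fun k _ => by positivity) (fun k _ => ?_)
        exact Real.add_one_le_exp _
    _ = Real.exp (∑ k ∈ Finset.range N, ((1 : ℝ) + k) ^ (-s)) := by
        rw [Real.exp_sum]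
    _ ≤ c := by
        rw [hc, Real.exp_le_exp]
        exact Summable.sum_le_tsum _ (fun k _ => by positivity) hg

lemma tsum_mul_le_sqrt {u v : Finset ℕ → ℝ} (hu : ∀ σ, 0 ≤ u σ) (hv : ∀ σ, 0 ≤ v σ)
    (hu2 : Summable (fun σ => u σ ^ 2)) (hv2 : Summable (fun σ => v σ ^ 2)) :
    ∑' σ, u σ * v σ ≤ Real.sqrt (∑' σ, u σ ^ 2) * Real.sqrt (∑' σ, v σ ^ 2) := by
  have hsum : Summable (fun σ => u σ * v σ) := by
    refine Summable.of_nonneg_of_le (fun σ => mul_nonneg (hu σ) (hv σ)) (fun σ => ?_)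
      ((hu2.add hv2).div_const 2)
    nlinarith [sq_nonneg (u σ - v σ)]
  refine Summable.tsum_le_of_sum_le hsum fun F => ?_
  have h1 := Finset.sum_mul_sq_le_sq_mul_sq F u v
  have h2 : ∑ σ ∈ F, u σ * v σ ≤
      Real.sqrt ((∑ σ ∈ F, u σ ^ 2) * ∑ σ ∈ F, v σ ^ 2) := by
    rw [← Real.sqrt_sq (Finset.sum_nonneg fun σ _ => mul_nonneg (hu σ) (hv σ))]
    exact Real.sqrt_le_sqrt h1
  refine h2.trans ?_
  rw [Real.sqrt_mul (Finset.sum_nonneg fun σ _ => sq_nonneg _)]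
  gcongr
  · exact Summable.sum_le_tsum _ (fun σ _ => sq_nonneg _) hu2
  · exact Summable.sum_le_tsum _ (fun σ _ => sq_nonneg _) hv2

set_option maxHeartbeats 1000000 in
/-- **Continuity of the spectral integral w.r.t. the canonical spectral measure.**
Let `Φ ∈ S_p*`, represented by its Fock coefficients `a γ = ⟨⟨Φ, Z_γ⟩⟩` with
`‖Φ‖_{-p}² = ∑_γ λ_γ^{-2p}|a γ|² < ∞`. The spectral integral `∫_Σ Φ dπ₀` has 2D-Fock
transform `(σ,τ) ↦ ⟨⟨Φ, Z_{σ△τ}⟩⟩ = a(σ△τ)`. Then for any `q > p + 1/2` it extends to a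
bounded operator `S_q → S_q*` (in the `ℓ²`-models: matrix entries
`λ_σ^{-q} λ_τ^{-q} a(σ△τ)`) of norm at most `(∑_σ λ_σ^{-2(q-p)})·‖Φ‖_{-p}`. -/
theorem stmt15 (p : ℝ) (hp : 0 ≤ p) (a : Finset ℕ → ℂ)
    (ha : Summable (fun γ : Finset ℕ => lam γ ^ (-(2 * p)) * ‖a γ‖ ^ 2))
    (q : ℝ) (hq : q > p + 1 / 2) :
    ∃ T : Hmodel →L[ℂ] StrongDual ℂ Hmodel,
      (∀ σ τ : Finset ℕ,
        T (lp.single 2 σ (1 : ℂ)) (lp.single 2 τ (1 : ℂ))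
          = ((lam σ ^ (-q) * lam τ ^ (-q) : ℝ) : ℂ) * a (symmDiff σ τ)) ∧
      ‖T‖ ≤ (∑' σ : Finset ℕ, lam σ ^ (-(2 * (q - p)))) *
        Real.sqrt (∑' γ : Finset ℕ, lam γ ^ (-(2 * p)) * ‖a γ‖ ^ 2) := by
  classical
  -- notation
  set r : ℝ := q - p with hrdef
  have hr : (1 : ℝ) / 2 < r := by simp only [hrdef]; linarith
  set w : Finset ℕ → ℝ := fun σ => lam σ ^ (-r) with hwdef
  have hw : ∀ σ, 0 < w σ := fun σ => Real.rpow_pos_of_pos (lam_pos σ) _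
  have hwsq : ∀ σ, w σ ^ 2 = lam σ ^ (-(2 * (q - p))) := by
    intro σ
    rw [hwdef]
    rw [← Real.rpow_natCast (lam σ ^ (-r)) 2, ← Real.rpow_mul (lam_pos σ).le]
    norm_num
    ring_nf
    congr 1
    rw [hrdef]
    ring
  set C : ℝ := ∑' σ : Finset ℕ, lam σ ^ (-(2 * (q - p))) with hCdef
  have hCsum : Summable (fun σ : Finset ℕ => lam σ ^ (-(2 * (q - p)))) :=
    summable_lam_rpow (by linarith)
  have hw2 : Summable (fun σ => w σ ^ 2) := by
    simp_rw [hwsq]; exact hCsum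
  have hC0 : 0 ≤ C := tsum_nonneg fun σ => Real.rpow_nonneg (lam_pos σ).le _
  have hCw : ∑' σ, w σ ^ 2 = C := by rw [hCdef]; exact tsum_congr hwsq
  set SA : ℝ := ∑' γ : Finset ℕ, lam γ ^ (-(2 * p)) * ‖a γ‖ ^ 2 with hSAdef
  have hSA0 : 0 ≤ SA :=
    tsum_nonneg fun γ => mul_nonneg (Real.rpow_nonneg (lam_pos γ).le _) (sq_nonneg _)
  set A : ℝ := Real.sqrt SA with hAdef
  have hA0 : 0 ≤ A := Real.sqrt_nonneg _
  have hA2 : A ^ 2 = SA := Real.sq_sqrt hSA0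
  -- coefficient bound
  have habound : ∀ γ, ‖a γ‖ ≤ lam γ ^ p * A := by
    intro γ
    have h1 : lam γ ^ (-(2 * p)) * ‖a γ‖ ^ 2 ≤ SA :=
      Summable.le_tsum ha γ fun γ' _ =>
        mul_nonneg (Real.rpow_nonneg (lam_pos γ').le _) (sq_nonneg _)
    have hkey : (lam γ ^ p) ^ 2 * lam γ ^ (-(2 * p)) = 1 := by
      rw [← Real.rpow_natCast (lam γ ^ p) 2, ← Real.rpow_mul (lam_pos γ).le,
        ← Real.rpow_add (lam_pos γ), show p * ((2:ℕ):ℝ) + -(2 * p) = 0 by push_cast; ring, Real.rpow_zero]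
    have h2 : ‖a γ‖ ^ 2 ≤ (lam γ ^ p * A) ^ 2 := by
      have h3 : ‖a γ‖ ^ 2 = (lam γ ^ p) ^ 2 * (lam γ ^ (-(2 * p)) * ‖a γ‖ ^ 2) := by
        rw [← mul_assoc, hkey, one_mul]
      rw [h3, mul_pow, hA2]
      exact mul_le_mul_of_nonneg_left h1 (sq_nonneg _)
    calc ‖a γ‖ = Real.sqrt (‖a γ‖ ^ 2) := (Real.sqrt_sq (norm_nonneg _)).symm
      _ ≤ Real.sqrt ((lam γ ^ p * A) ^ 2) := Real.sqrt_le_sqrt h2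
      _ = lam γ ^ p * A :=
        Real.sqrt_sq (mul_nonneg (Real.rpow_nonneg (lam_pos γ).le _) hA0)
  -- matrix entries
  set M : Finset ℕ → Finset ℕ → ℂ :=
    fun σ τ => ((lam σ ^ (-q) * lam τ ^ (-q) : ℝ) : ℂ) * a (symmDiff σ τ) with hMdef
  have hqp : ∀ σ : Finset ℕ, lam σ ^ (-q) * lam σ ^ p = w σ := by
    intro σ
    rw [hwdef, ← Real.rpow_add (lam_pos σ)]
    congr 1
    simp only [hrdef]
    ring
  have hM : ∀ σ τ, ‖M σ τ‖ ≤ A * (w σ * w τ) := by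
    intro σ τ
    have hnn : (0:ℝ) ≤ lam σ ^ (-q) * lam τ ^ (-q) :=
      mul_nonneg (Real.rpow_nonneg (lam_pos σ).le _) (Real.rpow_nonneg (lam_pos τ).le _)
    have h1 : ‖M σ τ‖ = lam σ ^ (-q) * lam τ ^ (-q) * ‖a (symmDiff σ τ)‖ := by
      rw [hMdef]
      simp only [norm_mul, Complex.norm_real, Real.norm_eq_abs,
        abs_of_nonneg (Real.rpow_nonneg (lam_pos σ).le (-q)),
        abs_of_nonneg (Real.rpow_nonneg (lam_pos τ).le (-q))]
    rw [h1]
    have h2 : ‖a (symmDiff σ τ)‖ ≤ (lam σ * lam τ) ^ p * A := by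
      refine (habound _).trans ?_
      have := Real.rpow_le_rpow (lam_pos _).le (lam_symmDiff_le σ τ) hp
      exact mul_le_mul_of_nonneg_right this hA0
    calc lam σ ^ (-q) * lam τ ^ (-q) * ‖a (symmDiff σ τ)‖
        ≤ lam σ ^ (-q) * lam τ ^ (-q) * ((lam σ * lam τ) ^ p * A) :=
          mul_le_mul_of_nonneg_left h2 hnn
      _ = A * (w σ * w τ) := by
          rw [Real.mul_rpow (lam_pos σ).le (lam_pos τ).le, ← hqp σ, ← hqp τ]
          ring
  -- ℓ² facts about elements of Hmodel
  have hcoe2 : ∀ t : ℝ, 0 ≤ t → t ^ ((2 : ENNReal)).toReal = t ^ 2 := by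
    intro t ht
    rw [show ((2 : ENNReal)).toReal = ((2 : ℕ) : ℝ) by norm_num, Real.rpow_natCast]
  have hxsq : ∀ x : Hmodel, Summable (fun σ => ‖x σ‖ ^ 2) := by
    intro x
    have := (lp.memℓp x).summable (by norm_num : 0 < ((2 : ENNReal)).toReal)
    exact this.congr fun σ => hcoe2 _ (norm_nonneg _)
  have hxnorm : ∀ x : Hmodel, Real.sqrt (∑' σ, ‖x σ‖ ^ 2) = ‖x‖ := by
    intro x
    have h := lp.norm_rpow_eq_tsum (by norm_num : 0 < ((2 : ENNReal)).toReal) x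
    rw [hcoe2 _ (norm_nonneg x)] at h
    have h2 : ∑' σ, ‖x σ‖ ^ 2 = ‖x‖ ^ 2 := by
      rw [h]; exact tsum_congr fun σ => (hcoe2 _ (norm_nonneg _)).symm
    rw [h2, Real.sqrt_sq (norm_nonneg _)]
  have l2sum : ∀ x : Hmodel, Summable (fun σ => w σ * ‖x σ‖) := by
    intro x
    refine Summable.of_nonneg_of_le
      (fun σ => mul_nonneg (hw σ).le (norm_nonneg _)) (fun σ => ?_)
      ((hw2.add (hxsq x)).div_const 2)
    nlinarith [sq_nonneg (w σ - ‖x σ‖)]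
  have l2bound : ∀ x : Hmodel, ∑' σ, w σ * ‖x σ‖ ≤ Real.sqrt C * ‖x‖ := by
    intro x
    have := tsum_mul_le_sqrt (fun σ => (hw σ).le) (fun σ => norm_nonneg (x σ))
      hw2 (hxsq x)
    rwa [hCw, hxnorm x] at this
  -- summability of the double series
  have hprodsum : ∀ x y : Hmodel,
      Summable (fun st : Finset ℕ × Finset ℕ =>
        (A * (w st.1 * ‖x st.1‖)) * (w st.2 * ‖y st.2‖)) := by
    intro x y
    exact Summable.mul_of_nonneg (f := fun s => A * (w s * ‖x s‖))
      (g := fun t => w t * ‖y t‖) ((l2sum x).mul_left A) (l2sum y)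
      (fun σ => mul_nonneg hA0 (mul_nonneg (hw σ).le (norm_nonneg _)))
      (fun τ => mul_nonneg (hw τ).le (norm_nonneg _))
  have hptwise : ∀ (x y : Hmodel) (st : Finset ℕ × Finset ℕ),
      ‖M st.1 st.2 * x st.1 * y st.2‖ ≤
        (A * (w st.1 * ‖x st.1‖)) * (w st.2 * ‖y st.2‖) := by
    intro x y st
    rw [norm_mul, norm_mul]
    have := hM st.1 st.2
    have h1 : ‖M st.1 st.2‖ * ‖x st.1‖ * ‖y st.2‖ ≤
        (A * (w st.1 * w st.2)) * ‖x st.1‖ * ‖y st.2‖ := by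
      gcongr
    refine h1.trans_eq ?_
    ring
  have hnormsum : ∀ x y : Hmodel,
      Summable (fun st : Finset ℕ × Finset ℕ => ‖M st.1 st.2 * x st.1 * y st.2‖) := by
    intro x y
    exact Summable.of_nonneg_of_le (fun st => norm_nonneg _) (hptwise x y) (hprodsum x y)
  have hFs : ∀ x y : Hmodel,
      Summable (fun st : Finset ℕ × Finset ℕ => M st.1 st.2 * x st.1 * y st.2) :=
    fun x y => (hnormsum x y).of_norm
  -- the bilinear form
  set B : Hmodel → Hmodel → ℂ :=
    fun x y => ∑' st : Finset ℕ × Finset ℕ, M st.1 st.2 * x st.1 * y st.2 with hBdef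
  have hBadd1 : ∀ (x x' y : Hmodel), B (x + x') y = B x y + B x' y := by
    intro x x' y
    have he : (fun st : Finset ℕ × Finset ℕ => M st.1 st.2 * (x + x') st.1 * y st.2)
        = fun st => M st.1 st.2 * x st.1 * y st.2 + M st.1 st.2 * x' st.1 * y st.2 := by
      funext st
      rw [lp.coeFn_add, Pi.add_apply]
      ring
    simp only [hBdef, he]
    exact Summable.tsum_add (hFs x y) (hFs x' y)
  have hBsmul1 : ∀ (c : ℂ) (x y : Hmodel), B (c • x) y = c * B x y := by
    intro c x y
    have he : (fun st : Finset ℕ × Finset ℕ => M st.1 st.2 * (c • x) st.1 * y st.2)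
        = fun st => c * (M st.1 st.2 * x st.1 * y st.2) := by
      funext st
      rw [lp.coeFn_smul, Pi.smul_apply, smul_eq_mul]
      ring
    simp only [hBdef, he]
    exact tsum_mul_left
  have hBadd2 : ∀ (x y y' : Hmodel), B x (y + y') = B x y + B x y' := by
    intro x y y'
    have he : (fun st : Finset ℕ × Finset ℕ => M st.1 st.2 * x st.1 * (y + y') st.2)
        = fun st => M st.1 st.2 * x st.1 * y st.2 + M st.1 st.2 * x st.1 * y' st.2 := by
      funext st
      rw [lp.coeFn_add, Pi.add_apply]
      ring
    simp only [hBdef, he]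
    exact Summable.tsum_add (hFs x y) (hFs x y')
  have hBsmul2 : ∀ (c : ℂ) (x y : Hmodel), B x (c • y) = c * B x y := by
    intro c x y
    have he : (fun st : Finset ℕ × Finset ℕ => M st.1 st.2 * x st.1 * (c • y) st.2)
        = fun st => c * (M st.1 st.2 * x st.1 * y st.2) := by
      funext st
      rw [lp.coeFn_smul, Pi.smul_apply, smul_eq_mul]
      ring
    simp only [hBdef, he]
    exact tsum_mul_left
  set Blin : Hmodel →ₗ[ℂ] Hmodel →ₗ[ℂ] ℂ :=
    LinearMap.mk₂ ℂ B hBadd1 (fun c x y => by rw [hBsmul1 c x y, smul_eq_mul])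
      hBadd2 (fun c x y => by rw [hBsmul2 c x y, smul_eq_mul]) with hBlin
  -- the norm bound for the bilinear form
  have hBbound : ∀ x y : Hmodel, ‖Blin x y‖ ≤ (C * A) * ‖x‖ * ‖y‖ := by
    intro x y
    have h0 : Blin x y = B x y := rfl
    have h1 : ‖B x y‖ ≤ ∑' st : Finset ℕ × Finset ℕ, ‖M st.1 st.2 * x st.1 * y st.2‖ :=
      norm_tsum_le_tsum_norm (hnormsum x y)
    have h2 : ∑' st : Finset ℕ × Finset ℕ, ‖M st.1 st.2 * x st.1 * y st.2‖ ≤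
        ∑' st : Finset ℕ × Finset ℕ, (A * (w st.1 * ‖x st.1‖)) * (w st.2 * ‖y st.2‖) :=
      Summable.tsum_le_tsum (hptwise x y) (hnormsum x y) (hprodsum x y)
    have h3 : ∑' st : Finset ℕ × Finset ℕ, (A * (w st.1 * ‖x st.1‖)) * (w st.2 * ‖y st.2‖)
        = (∑' s, A * (w s * ‖x s‖)) * ∑' t, w t * ‖y t‖ :=
      (Summable.tsum_mul_tsum ((l2sum x).mul_left A) (l2sum y) (hprodsum x y)).symm
    have h4 : (∑' s, A * (w s * ‖x s‖)) = A * ∑' s, w s * ‖x s‖ := tsum_mul_left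
    have h5 : (∑' s, w s * ‖x s‖) * ∑' t, w t * ‖y t‖ ≤
        (Real.sqrt C * ‖x‖) * (Real.sqrt C * ‖y‖) := by
      have hx0 : 0 ≤ ∑' s, w s * ‖x s‖ :=
        tsum_nonneg fun s => mul_nonneg (hw s).le (norm_nonneg _)
      have hy0 : 0 ≤ ∑' t, w t * ‖y t‖ :=
        tsum_nonneg fun t => mul_nonneg (hw t).le (norm_nonneg _)
      exact mul_le_mul (l2bound x) (l2bound y) hy0
        (mul_nonneg (Real.sqrt_nonneg _) (norm_nonneg _))
    have h6 : A * ((Real.sqrt C * ‖x‖) * (Real.sqrt C * ‖y‖)) = (C * A) * ‖x‖ * ‖y‖ := by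
      have h : Real.sqrt C * Real.sqrt C = C := Real.mul_self_sqrt hC0
      calc A * ((Real.sqrt C * ‖x‖) * (Real.sqrt C * ‖y‖))
          = (Real.sqrt C * Real.sqrt C) * A * ‖x‖ * ‖y‖ := by ring
        _ = (C * A) * ‖x‖ * ‖y‖ := by rw [h]
    rw [h0]
    calc ‖B x y‖ ≤ ∑' st : Finset ℕ × Finset ℕ, ‖M st.1 st.2 * x st.1 * y st.2‖ := h1
      _ ≤ ∑' st : Finset ℕ × Finset ℕ, (A * (w st.1 * ‖x st.1‖)) * (w st.2 * ‖y st.2‖) := h2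
      _ = A * ((∑' s, w s * ‖x s‖) * ∑' t, w t * ‖y t‖) := by rw [h3, h4]; ring
      _ ≤ A * ((Real.sqrt C * ‖x‖) * (Real.sqrt C * ‖y‖)) := by
          refine mul_le_mul_of_nonneg_left h5 hA0
      _ = (C * A) * ‖x‖ * ‖y‖ := h6
  refine ⟨LinearMap.mkContinuous₂ Blin (C * A) hBbound, ?_, ?_⟩
  · intro σ τ
    have h0 : (LinearMap.mkContinuous₂ Blin (C * A) hBbound)
        (lp.single 2 σ (1 : ℂ)) (lp.single 2 τ (1 : ℂ))
        = B (lp.single 2 σ (1 : ℂ)) (lp.single 2 τ (1 : ℂ)) := rfl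
    rw [h0]
    have hB0 : B (lp.single 2 σ (1 : ℂ)) (lp.single 2 τ (1 : ℂ))
        = ∑' st : Finset ℕ × Finset ℕ,
            M st.1 st.2 * (lp.single 2 σ (1 : ℂ) : Hmodel) st.1
              * (lp.single 2 τ (1 : ℂ) : Hmodel) st.2 := rfl
    rw [hB0]
    have h1 : ∑' st : Finset ℕ × Finset ℕ,
        M st.1 st.2 * (lp.single 2 σ (1 : ℂ) : Hmodel) st.1
          * (lp.single 2 τ (1 : ℂ) : Hmodel) st.2
        = M σ τ * (lp.single 2 σ (1 : ℂ) : Hmodel) σ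
          * (lp.single 2 τ (1 : ℂ) : Hmodel) τ := by
      refine tsum_eq_single (σ, τ) ?_
      intro st hst
      by_cases h1 : st.1 = σ
      · have h2 : st.2 ≠ τ := by
          intro h2
          exact hst (Prod.ext h1 h2)
        rw [lp.single_apply_ne 2 τ _ h2, mul_zero]
      · rw [lp.single_apply_ne 2 σ _ h1, mul_zero, zero_mul]
    rw [h1, lp.single_apply_self (E := fun _ : Finset ℕ => ℂ) 2 σ (1:ℂ),
      lp.single_apply_self (E := fun _ : Finset ℕ => ℂ) 2 τ (1:ℂ), mul_one, mul_one]
  · exact LinearMap.mkContinuous₂_norm_le Blin (mul_nonneg hC0 hA0) hBbound
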